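/- (Theorem 1, algebraic form) With notation as in the context, det(I_N − A_1 u + A_2 u^2 − … + (−1)^{n−1} A_{n−1} u^{n−1} + (−1)^n u^n I_N) = Π_{i=1}^n det(I_N − λ(\bar{s}_i) u) as polynomials in u. (The left-hand side is the polynomial appearing in the Ihara type formula Z_+(X_Γ,u) = det(I_N − A_1 u + … + (−1)^n u^n I_N) for the positive-geodesic zeta function.) -/

import Mathlib

noncomputable section

open Polynomial

def diagZ (n : ℕ) : Submodule ℤ (Fin n → ℤ) := Submodule.span ℤ {(fun _ => 1 : Fin n → ℤ)}

/-- `Λ = ℤ^n / Δ_ℤ`. -/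
abbrev LambdaZ (n : ℕ) := (Fin n → ℤ) ⧸ diagZ n

/-- The class `s_i` of the standard basis vector `e_i` in `Λ`. -/
def sgen (n : ℕ) (i : Fin n) : LambdaZ n := Submodule.Quotient.mk (Pi.single i 1)

def typeLin (n : ℕ) : (Fin n → ℤ) →ₗ[ℤ] ZMod n where
  toFun x := ∑ i, (x i : ZMod n)
  map_add' x y := by simp [Finset.sum_add_distrib]
  map_smul' c x := by simp [Finset.mul_sum]

/-- The type of an element of `Λ`: the sum of the coordinates mod `n`. -/
def typeQ (n : ℕ) : LambdaZ n →ₗ[ℤ] ZMod n :=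
  Submodule.liftQ (diagZ n) (typeLin n)
    (by
      rw [diagZ, Submodule.span_le]
      intro x hx
      simp only [Set.mem_singleton_iff] at hx
      subst hx
      simp [typeLin])

variable {n : ℕ} (Γ : AddSubgroup (LambdaZ n))

/-- `Q = Λ/Γ`. -/
abbrev Qgrp (Γ : AddSubgroup (LambdaZ n)) := LambdaZ n ⧸ Γ

/-- The image `\bar s_i` of `s_i` in `Q = Λ/Γ`. -/
def sbar (Γ : AddSubgroup (LambdaZ n)) (i : Fin n) : Qgrp Γ :=
  QuotientAddGroup.mk (sgen n i)

/-- The matrix of the regular representation operator `λ(q)` on functions `Q → ℂ`,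
with entries in `ℂ[X]`. -/
def regMat (Γ : AddSubgroup (LambdaZ n)) [DecidableEq (Qgrp Γ)] (q : Qgrp Γ) :
    Matrix (Qgrp Γ) (Qgrp Γ) (Polynomial ℂ) :=
  Matrix.of fun x y => if x = q + y then (1 : Polynomial ℂ) else 0

/-- The type-`i` adjacency operator `A_i = ∑_{|T| = i} λ(∑_{j ∈ T} \bar s_j)`. -/
def adjMat (Γ : AddSubgroup (LambdaZ n)) [DecidableEq (Qgrp Γ)] (i : ℕ) :
    Matrix (Qgrp Γ) (Qgrp Γ) (Polynomial ℂ) :=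
  ∑ T ∈ Finset.univ.powersetCard i, regMat Γ (∑ j ∈ T, sbar Γ j)


section IharaAux
variable [Fintype (Qgrp Γ)] [DecidableEq (Qgrp Γ)]

set_option linter.unusedSectionVars false

lemma regMat_zero : regMat Γ 0 = 1 := by
  ext x y; simp [regMat, Matrix.one_apply]

lemma regMat_add (a b : Qgrp Γ) : regMat Γ (a + b) = regMat Γ a * regMat Γ b := by
  ext x y
  simp only [regMat, Matrix.mul_apply, Matrix.of_apply]
  rw [Finset.sum_eq_single (b + y)]
  · simp [add_assoc]
  · intro z _ hz; simp [hz]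
  · simp

def psiReg : Multiplicative (Qgrp Γ) →* Matrix (Qgrp Γ) (Qgrp Γ) (Polynomial ℂ) where
  toFun q := regMat Γ q.toAdd
  map_one' := regMat_zero Γ
  map_mul' _ _ := regMat_add Γ _ _

def phiReg : AddMonoidAlgebra (Polynomial ℂ) (Qgrp Γ) →ₐ[Polynomial ℂ]
    Matrix (Qgrp Γ) (Qgrp Γ) (Polynomial ℂ) :=
  AddMonoidAlgebra.lift _ _ _ (psiReg Γ)

lemma phiReg_single (a : Qgrp Γ) (c : Polynomial ℂ) :
    phiReg Γ (AddMonoidAlgebra.single a c) = c • regMat Γ a := by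
  simp [phiReg, AddMonoidAlgebra.lift_single, psiReg]

lemma sbar_sum : (∑ i : Fin n, sbar Γ i) = 0 := by
  have h1 : (∑ i : Fin n, sgen n i) = 0 := by
    have h2 : (∑ i : Fin n, (Pi.single i (1:ℤ) : Fin n → ℤ)) = fun _ => 1 := by
      ext j; simp [Finset.sum_apply, Pi.single_apply]
    have h3 : (∑ i : Fin n, sgen n i) =
        Submodule.Quotient.mk (∑ i : Fin n, (Pi.single i (1:ℤ) : Fin n → ℤ)) :=
      (map_sum (Submodule.mkQ (diagZ n)) (fun i => (Pi.single i (1:ℤ) : Fin n → ℤ)) Finset.univ).symm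
    rw [h3, h2, Submodule.Quotient.mk_eq_zero]
    exact Submodule.subset_span rfl
  have h4 : (∑ i : Fin n, sbar Γ i) = QuotientAddGroup.mk (∑ i : Fin n, sgen n i) :=
    (map_sum (QuotientAddGroup.mk' Γ) (fun i => sgen n i) Finset.univ).symm
  rw [h4, h1]; rfl

end IharaAux

/-- `det(I - A₁u + A₂u² - … + (-1)^{n-1}A_{n-1}u^{n-1} + (-1)^n u^n I)
  = ∏_{i=1}^n det(I - λ(\bar s_i) u)`. -/
theorem ihara_det_factorization (n : ℕ) (hn : 2 ≤ n)
    (Γ : AddSubgroup (LambdaZ n)) [Fintype (Qgrp Γ)] [DecidableEq (Qgrp Γ)]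
    (N : ℕ) (hN : Fintype.card (Qgrp Γ) = N)
    (htype : ∀ γ ∈ Γ, typeQ n γ = 0) :
    Matrix.det ((1 : Matrix (Qgrp Γ) (Qgrp Γ) (Polynomial ℂ)) +
        (∑ i ∈ Finset.Icc 1 (n - 1),
          ((-1 : Polynomial ℂ) ^ i * Polynomial.X ^ i) • adjMat Γ i) +
        ((-1 : Polynomial ℂ) ^ n * Polynomial.X ^ n) •
          (1 : Matrix (Qgrp Γ) (Qgrp Γ) (Polynomial ℂ))) =
    ∏ i : Fin n,
      Matrix.det ((1 : Matrix (Qgrp Γ) (Qgrp Γ) (Polynomial ℂ)) -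
        (Polynomial.X : Polynomial ℂ) • regMat Γ (sbar Γ i)) := by
  classical
  set P : AddMonoidAlgebra (Polynomial ℂ) (Qgrp Γ) :=
    ∏ i : Fin n, (1 - AddMonoidAlgebra.single (sbar Γ i) Polynomial.X) with hPdef
  have hPexp : P = ∑ T ∈ (Finset.univ : Finset (Fin n)).powerset,
      AddMonoidAlgebra.single (∑ i ∈ T, sbar Γ i) ((-Polynomial.X : Polynomial ℂ) ^ T.card) := by
    rw [hPdef]
    have h5 : ∀ i : Fin n, (1 - AddMonoidAlgebra.single (sbar Γ i) (Polynomial.X : Polynomial ℂ))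
        = AddMonoidAlgebra.single (sbar Γ i) (-Polynomial.X) + 1 := by
      intro i
      rw [sub_eq_neg_add]
      congr 1
      exact (AddMonoidAlgebra.single_neg _ _).symm
    simp_rw [h5]
    rw [Finset.prod_add]
    refine Finset.sum_congr rfl fun T _ => ?_
    rw [Finset.prod_const_one, mul_one, AddMonoidAlgebra.prod_single, Finset.prod_const]
  have hφP : phiReg Γ P = ∑ i ∈ Finset.range (n + 1),
      ((-1 : Polynomial ℂ) ^ i * Polynomial.X ^ i) • adjMat Γ i := by
    rw [hPexp, map_sum, Finset.sum_powerset]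
    have hcard : (Finset.univ : Finset (Fin n)).card = n := by simp
    rw [hcard]
    refine Finset.sum_congr rfl fun i _ => ?_
    rw [adjMat, Finset.smul_sum]
    refine Finset.sum_congr rfl fun T hT => ?_
    obtain ⟨-, hTc⟩ := Finset.mem_powersetCard.mp hT
    rw [phiReg_single, hTc, neg_pow]
  have h0 : adjMat Γ 0 = 1 := by
    simp [adjMat, regMat_zero]
  have hnn : adjMat Γ n = 1 := by
    have huniv : (Finset.univ : Finset (Fin n)).powersetCard n = {Finset.univ} := by
      have := Finset.powersetCard_self (Finset.univ : Finset (Fin n))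
      simpa using this
    rw [adjMat, huniv, Finset.sum_singleton, sbar_sum, regMat_zero]
  have hrange : Finset.range (n + 1) = insert 0 (insert n (Finset.Icc 1 (n - 1))) := by
    ext k
    simp only [Finset.mem_range, Finset.mem_insert, Finset.mem_Icc]
    omega
  have h0notin : (0 : ℕ) ∉ insert n (Finset.Icc 1 (n - 1)) := by
    simp only [Finset.mem_insert, Finset.mem_Icc]; omega
  have hnnotin : n ∉ Finset.Icc 1 (n - 1) := by
    simp only [Finset.mem_Icc]; omega
  have hmat : (1 : Matrix (Qgrp Γ) (Qgrp Γ) (Polynomial ℂ)) +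
        (∑ i ∈ Finset.Icc 1 (n - 1),
          ((-1 : Polynomial ℂ) ^ i * Polynomial.X ^ i) • adjMat Γ i) +
        ((-1 : Polynomial ℂ) ^ n * Polynomial.X ^ n) •
          (1 : Matrix (Qgrp Γ) (Qgrp Γ) (Polynomial ℂ)) = phiReg Γ P := by
    rw [hφP, hrange, Finset.sum_insert h0notin, Finset.sum_insert hnnotin, h0, hnn]
    simp only [pow_zero, one_mul, one_smul]
    abel
  rw [hmat]
  have hdet : Matrix.det (phiReg Γ P) = ∏ i : Fin n,
      Matrix.det (phiReg Γ (1 - AddMonoidAlgebra.single (sbar Γ i) Polynomial.X)) :=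
    map_prod ((Matrix.detMonoidHom).comp (phiReg Γ).toRingHom.toMonoidHom)
      (fun i => 1 - AddMonoidAlgebra.single (sbar Γ i) Polynomial.X) Finset.univ
  rw [hdet]
  refine Finset.prod_congr rfl fun i _ => ?_
  rw [map_sub, map_one, phiReg_single]
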